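/- Let n, m be positive integers, α = (α_1, ..., α_m) ∈ ℂ^m with D(α) ≤ 1/2. Then the mn-tuple formed by the points β_{k,ℓ} = α_k^{1/n} ζ_n^ℓ (for 1 ≤ k ≤ m, 1 ≤ ℓ ≤ n, and any fixed choice of n-th roots α_k^{1/n}) satisfies D((β_{k,ℓ})) ≤ (2/n) D(α). -/

import Mathlib

/-- `ζ_d = exp(2πi/d)`. -/
noncomputable def zetad (d : ℕ) : ℂ := Complex.exp (2 * Real.pi * Complex.I / d)

/-- The finite discrepancy `D(ξ) = inf_{|u|=1} max_j min_i |ξ_i − u ζ_d^j|`. -/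
noncomputable def Disc {d : ℕ} (ξ : Fin d → ℂ) : ℝ :=
  sInf {t : ℝ | ∃ u : ℂ, ‖u‖ = 1 ∧
    t = ⨆ j : Fin d, ⨅ i : Fin d, ‖ξ i - u * zetad d ^ ((j : ℕ) + 1)‖}

open Real Finset

lemma zetad_eq (d : ℕ) : zetad d = Complex.exp (((2 * π / d : ℝ) : ℂ) * Complex.I) := by
  unfold zetad; congr 1; push_cast; ring

lemma abs_zetad (d : ℕ) : ‖zetad d‖ = 1 := by
  rw [zetad_eq]; exact Complex.norm_exp_ofReal_mul_I _

lemma zetad_pow_self (d : ℕ) (hd : 0 < d) : zetad d ^ d = 1 := by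
  rw [zetad, ← Complex.exp_nat_mul]
  have hd' : (d : ℂ) ≠ 0 := Nat.cast_ne_zero.mpr hd.ne'
  rw [show (d : ℂ) * (2 * (π : ℂ) * Complex.I / d) = 2 * π * Complex.I by field_simp]
  exact Complex.exp_two_pi_mul_I

lemma zetad_pow_mn (m n : ℕ) (hm : 0 < m) (hn : 0 < n) : zetad (m * n) ^ n = zetad m := by
  rw [zetad, ← Complex.exp_nat_mul, zetad]
  congr 1
  have hm' : (m : ℂ) ≠ 0 := Nat.cast_ne_zero.mpr hm.ne'
  have hn' : (n : ℂ) ≠ 0 := Nat.cast_ne_zero.mpr hn.ne'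
  push_cast
  field_simp

lemma term_bound (n k : ℕ) (hk : k < n) (ρ θ c : ℝ) (hρ : 0 < ρ)
    (hπ : (n : ℝ) * |θ| ≤ π) (hc0 : 0 ≤ c) (hc1 : c < 1)
    (hre : 1 - c ≤ ρ ^ n * Real.cos ((n : ℝ) * θ)) (hub : ρ ^ n ≤ 1 + c) :
    1 - c ≤ ρ ^ k * Real.cos ((k : ℝ) * θ - ((n : ℝ) - 1) * θ / 2) := by
  have hn1 : (1 : ℝ) ≤ (n : ℝ) := by exact_mod_cast Nat.one_le_iff_ne_zero.mpr (by omega)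
  have hkn : (k : ℝ) ≤ (n : ℝ) - 1 := by
    have : (k : ℝ) + 1 ≤ (n : ℝ) := by exact_mod_cast hk
    linarith
  have hk0 : (0 : ℝ) ≤ (k : ℝ) := Nat.cast_nonneg k
  obtain ⟨a, ha_def⟩ : ∃ a : ℝ, a = (k : ℝ) * θ - ((n : ℝ) - 1) * θ / 2 := ⟨_, rfl⟩
  rw [← ha_def]
  have hθ0 : 0 ≤ |θ| := abs_nonneg θ
  have ha : |a| ≤ (n : ℝ) * |θ| / 2 := by
    have h1 : a = (2 * (k : ℝ) - ((n : ℝ) - 1)) * θ / 2 := by rw [ha_def]; ring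
    rw [h1, abs_div, abs_mul]
    have h2 : |2 * (k : ℝ) - ((n : ℝ) - 1)| ≤ (n : ℝ) - 1 := by
      rw [abs_le]; constructor <;> linarith
    have : |2 * (k:ℝ) - ((n:ℝ)-1)| * |θ| ≤ (n:ℝ) * |θ| := by
      apply mul_le_mul (by linarith) le_rfl hθ0 (by linarith)
    rw [abs_of_pos (by norm_num : (0:ℝ) < 2)]
    linarith
  have hcos_n : Real.cos ((n : ℝ) * |θ|) = Real.cos ((n : ℝ) * θ) := by
    rw [show (n:ℝ) * |θ| = |(n:ℝ) * θ| by rw [abs_mul, abs_of_nonneg (by linarith : (0:ℝ) ≤ (n:ℝ))],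
      Real.cos_abs]
  have hcn_pos : 0 < Real.cos ((n : ℝ) * θ) := by
    nlinarith [pow_pos hρ n]
  rcases le_total ρ 1 with h1 | h1
  · -- ρ ≤ 1
    have hcn : Real.cos ((n : ℝ) * θ) ≤ Real.cos a := by
      rw [← Real.cos_abs a, ← hcos_n]
      apply Real.cos_le_cos_of_nonneg_of_le_pi (abs_nonneg a) hπ
      nlinarith [mul_nonneg (by linarith : (0:ℝ) ≤ (n:ℝ)) hθ0]
    have hpk : ρ ^ n ≤ ρ ^ k := pow_le_pow_of_le_one hρ.le h1 hk.le
    calc 1 - c ≤ ρ ^ n * Real.cos ((n:ℝ) * θ) := hre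
      _ ≤ ρ ^ k * Real.cos ((n:ℝ) * θ) := mul_le_mul_of_nonneg_right hpk hcn_pos.le
      _ ≤ ρ ^ k * Real.cos a := mul_le_mul_of_nonneg_left hcn (pow_nonneg hρ.le k)
  · -- 1 ≤ ρ
    have hpk : (1 : ℝ) ≤ ρ ^ k := by
      calc (1:ℝ) = 1 ^ k := (one_pow k).symm
        _ ≤ ρ ^ k := pow_le_pow_left₀ zero_le_one h1 k
    · have hcn2 : 1 - c ≤ (1 + c) * Real.cos ((n : ℝ) * θ) := by
        calc 1 - c ≤ ρ ^ n * Real.cos ((n:ℝ)*θ) := hre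
          _ ≤ (1 + c) * Real.cos ((n:ℝ)*θ) := mul_le_mul_of_nonneg_right hub hcn_pos.le
      have hhalf_mem : 0 ≤ Real.cos ((n : ℝ) * |θ| / 2) := by
        apply Real.cos_nonneg_of_mem_Icc
        constructor
        · nlinarith [Real.pi_pos]
        · nlinarith
      have hsq : Real.cos ((n:ℝ) * |θ| / 2) ^ 2 = 1/2 + Real.cos ((n:ℝ) * θ) / 2 := by
        have h := Real.cos_sq ((n:ℝ) * |θ| / 2)
        rw [show 2 * ((n:ℝ) * |θ| / 2) = (n:ℝ) * |θ| by ring, hcos_n] at h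
        exact h
      have h3 : 1 ≤ Real.cos ((n:ℝ) * |θ| / 2) ^ 2 * (1 + c) := by nlinarith [hsq, hcn2]
      have h4 : (1 - c)^2 * (1 + c) ≤ 1 := by
        nlinarith [mul_nonneg (mul_nonneg hc0 hc0) (by linarith : (0:ℝ) ≤ 1 - c), hc0]
      have h5 : (1 - c)^2 ≤ Real.cos ((n:ℝ) * |θ| / 2) ^ 2 := by
        by_contra hlt
        push_neg at hlt
        have h6 : Real.cos ((n:ℝ) * |θ| / 2) ^ 2 * (1 + c) < (1-c)^2 * (1 + c) := by
          apply mul_lt_mul_of_pos_right hlt (by linarith)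
        linarith
      have hhalf : 1 - c ≤ Real.cos ((n : ℝ) * |θ| / 2) := by
        by_contra hlt
        push_neg at hlt
        have h6 : Real.cos ((n:ℝ) * |θ| / 2) ^ 2 < (1-c)^2 := by
          rw [pow_two, pow_two]; exact mul_self_lt_mul_self hhalf_mem hlt
        linarith
      have hπ2 : (n:ℝ) * |θ| / 2 ≤ π := by linarith [Real.pi_pos]
      have hcosa : Real.cos ((n:ℝ) * |θ| / 2) ≤ Real.cos a := by
        rw [← Real.cos_abs a]
        exact Real.cos_le_cos_of_nonneg_of_le_pi (abs_nonneg a) hπ2 ha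
      calc 1 - c ≤ Real.cos ((n:ℝ)*|θ|/2) := hhalf
        _ ≤ Real.cos a := hcosa
        _ = 1 * Real.cos a := (one_mul _).symm
        _ ≤ ρ ^ k * Real.cos a := by
            apply mul_le_mul_of_nonneg_right hpk; linarith

lemma lemA (n : ℕ) (hn : 0 < n) (ρ θ c : ℝ) (hρ : 0 < ρ)
    (hθ : (n : ℝ) * |θ| ≤ π) (hc0 : 0 ≤ c) (hc1 : c < 1)
    (hz : ‖1 - ((ρ : ℂ) * Complex.exp (↑θ * Complex.I)) ^ n‖ ≤ c) :
    (1 - c) * n * ‖1 - (ρ : ℂ) * Complex.exp (↑θ * Complex.I)‖ ≤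
      ‖1 - ((ρ : ℂ) * Complex.exp (↑θ * Complex.I)) ^ n‖ := by
  set z := (ρ : ℂ) * Complex.exp (↑θ * Complex.I) with hz_def
  have hzk : ∀ k : ℕ, z ^ k = ((ρ ^ k : ℝ) : ℂ) * Complex.exp (↑((k : ℝ) * θ) * Complex.I) := by
    intro k
    rw [hz_def, mul_pow, ← Complex.exp_nat_mul]
    push_cast
    congr 1
    ring
  have hre' : ∀ (s x : ℝ), (((s : ℂ)) * Complex.exp (↑x * Complex.I)).re = s * Real.cos x := by
    intro s x
    rw [Complex.re_ofReal_mul, Complex.exp_ofReal_mul_I_re]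
  have hreN : 1 - c ≤ ρ ^ n * Real.cos ((n : ℝ) * θ) := by
    have hzre : (z ^ n).re = ρ ^ n * Real.cos ((n : ℝ) * θ) := by rw [hzk n, hre']
    have h1 := Complex.re_le_norm (1 - z ^ n)
    rw [Complex.sub_re, Complex.one_re, hzre] at h1
    linarith [le_trans h1 hz]
  have habs_exp : ∀ x : ℝ, ‖Complex.exp (↑x * Complex.I)‖ = 1 :=
    fun x => Complex.norm_exp_ofReal_mul_I x
  have habsz : ‖z‖ = ρ := by
    rw [hz_def, norm_mul, Complex.norm_real, Real.norm_eq_abs, habs_exp, mul_one, abs_of_pos hρ]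
  have hubN : ρ ^ n ≤ 1 + c := by
    have h1 := norm_add_le (z ^ n - 1) 1
    simp only [sub_add_cancel, norm_one] at h1
    have h2 : ‖z ^ n - 1‖ = ‖1 - z ^ n‖ := by
      rw [norm_sub_rev]
    rw [norm_pow, habsz] at h1
    linarith [h1, h2 ▸ hz]
  set e := -(((n : ℝ) - 1) * θ / 2) with he_def
  have hterm : ∀ k ∈ Finset.range n, 1 - c ≤ (Complex.exp (↑e * Complex.I) * z ^ k).re := by
    intro k hk
    have hcomb : Complex.exp (↑e * Complex.I) * z ^ k
        = ((ρ ^ k : ℝ) : ℂ) * Complex.exp (↑(e + (k : ℝ) * θ) * Complex.I) := by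
      rw [hzk k, Complex.ofReal_add, add_mul, Complex.exp_add]
      ring
    rw [hcomb, hre']
    have h := term_bound n k (Finset.mem_range.mp hk) ρ θ c hρ hθ hc0 hc1 hreN hubN
    have : e + (k : ℝ) * θ = (k : ℝ) * θ - ((n : ℝ) - 1) * θ / 2 := by rw [he_def]; ring
    rw [this]
    exact h
  have hsum : (1 - c) * n ≤ ‖∑ k ∈ Finset.range n, z ^ k‖ := by
    have h1 : (1 - c) * n ≤ (Complex.exp (↑e * Complex.I) * ∑ k ∈ Finset.range n, z ^ k).re := by
      rw [Finset.mul_sum, Complex.re_sum]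
      calc (1 - c) * n = ∑ _k ∈ Finset.range n, (1 - c) := by
            rw [Finset.sum_const, Finset.card_range, nsmul_eq_mul]; ring
        _ ≤ _ := Finset.sum_le_sum hterm
    calc (1 - c) * n ≤ (Complex.exp (↑e * Complex.I) * ∑ k ∈ Finset.range n, z ^ k).re := h1
      _ ≤ ‖Complex.exp (↑e * Complex.I) * ∑ k ∈ Finset.range n, z ^ k‖ :=
          Complex.re_le_norm _
      _ = ‖∑ k ∈ Finset.range n, z ^ k‖ := by rw [norm_mul, habs_exp, one_mul]
  have habs_eq : ‖1 - z ^ n‖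
      = ‖∑ k ∈ Finset.range n, z ^ k‖ * ‖1 - z‖ := by
    have h1 : ‖1 - z ^ n‖ = ‖z ^ n - 1‖ := norm_sub_rev _ _
    have h2 : ‖1 - z‖ = ‖z - 1‖ := norm_sub_rev _ _
    rw [h1, h2, ← geom_sum_mul z n, norm_mul]
  calc (1 - c) * n * ‖1 - z‖
      ≤ ‖∑ k ∈ Finset.range n, z ^ k‖ * ‖1 - z‖ :=
        mul_le_mul_of_nonneg_right hsum (norm_nonneg _)
    _ = ‖1 - z ^ n‖ := habs_eq.symm

lemma lemB (n : ℕ) (hn : 0 < n) (w a r : ℂ) (hw : ‖w‖ = 1)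
    (hrn : r ^ n = a) (c : ℝ) (hc1 : c < 1) (ha : ‖a - w ^ n‖ ≤ c) :
    ∃ j : Fin n, (1 - c) * n * ‖r * zetad n ^ ((j : ℕ) + 1) - w‖
      ≤ ‖a - w ^ n‖ := by
  have hc0 : 0 ≤ c := le_trans (norm_nonneg _) ha
  have hw0 : w ≠ 0 := by
    intro h; rw [h] at hw; simp at hw
  have hwn : ‖w ^ n‖ = 1 := by rw [norm_pow, hw, one_pow]
  have ha0 : a ≠ 0 := by
    intro h
    rw [h, zero_sub, norm_neg] at ha
    rw [hwn] at ha; linarith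
  have hr0 : r ≠ 0 := fun h => ha0 (by rw [← hrn, h, zero_pow hn.ne'])
  have hn' : (n : ℝ) ≠ 0 := Nat.cast_ne_zero.mpr hn.ne'
  have hnC : (n : ℂ) ≠ 0 := Nat.cast_ne_zero.mpr hn.ne'
  set φ := Complex.arg (r / w) with hφ_def
  set q : ℤ := round (φ * n / (2 * π)) with hq_def
  set θ := φ - 2 * π * q / n with hθ_def
  have hπ0 : (0 : ℝ) < π := Real.pi_pos
  have hθ : (n : ℝ) * |θ| ≤ π := by
    have h1 : |φ * n / (2 * π) - q| ≤ 1 / 2 := abs_sub_round _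
    have h2 : θ * n = 2 * π * (φ * n / (2 * π) - q) := by
      rw [hθ_def]; field_simp
    have h3 : |θ * n| ≤ π := by
      rw [h2, abs_mul, abs_of_pos (by linarith : (0:ℝ) < 2 * π)]
      nlinarith
    calc (n : ℝ) * |θ| = |θ * n| := by
          rw [abs_mul, abs_of_nonneg (Nat.cast_nonneg n : (0:ℝ) ≤ n)]; ring
      _ ≤ π := h3
  set ρ := ‖r‖ with hρ_def
  have hρ : 0 < ρ := norm_pos_iff.mpr hr0
  -- exponent
  set s : ℕ := (q % (n : ℤ)).toNat with hs_def
  have hsq : (s : ℤ) = q % (n : ℤ) := Int.toNat_of_nonneg (Int.emod_nonneg q (by exact_mod_cast hn.ne'))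
  have hsn : s < n := by
    have := Int.emod_lt_of_pos q (by exact_mod_cast hn : (0:ℤ) < (n:ℤ))
    omega
  set E : ℕ := n - s with hE_def
  have hE1 : 1 ≤ E := by omega
  have hEn : E ≤ n := by omega
  have hkey : (E : ℤ) + q = n * (1 + q / n) := by
    have h2 := Int.mul_ediv_add_emod q (n : ℤ)
    have h3 : (E : ℤ) = (n : ℤ) - s := by rw [hE_def]; push_cast [Nat.cast_sub hsn.le]; ring
    rw [h3, hsq]
    linarith [h2]
  -- the rotation identity
  have hrw : r = ((ρ : ℂ) * Complex.exp (↑φ * Complex.I)) * w := by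
    have h := Complex.norm_mul_exp_arg_mul_I (r / w)
    have habs : ‖r / w‖ = ρ := by rw [norm_div, hw, div_one, hρ_def]
    rw [habs, ← hφ_def] at h
    field_simp at h ⊢
    rw [h]
  have hzeta : zetad n ^ E = Complex.exp ((E : ℂ) * (2 * ↑π * Complex.I / n)) := by
    rw [zetad, ← Complex.exp_nat_mul]
  have hexp_eq : Complex.exp (↑φ * Complex.I) * Complex.exp ((E : ℂ) * (2 * ↑π * Complex.I / n))
      = Complex.exp (↑θ * Complex.I) := by
    rw [← Complex.exp_add]
    have hKC : (E : ℂ) + (q : ℂ) = (n : ℂ) * ((1 + q / (n:ℤ) : ℤ) : ℂ) := by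
      exact_mod_cast congrArg (Int.cast : ℤ → ℂ) hkey
    have harg : ↑φ * Complex.I + (E : ℂ) * (2 * ↑π * Complex.I / n)
        = ↑θ * Complex.I + ((1 + q / (n:ℤ) : ℤ) : ℂ) * (2 * ↑π * Complex.I) := by
      have hθC : (θ : ℂ) = (φ : ℂ) - 2 * ↑π * (q : ℂ) / n := by
        rw [hθ_def]; push_cast; ring
      rw [hθC]
      field_simp
      push_cast at hKC ⊢
      linear_combination (2 * (π:ℂ)) * hKC
    rw [harg, Complex.exp_add, Complex.exp_int_mul_two_pi_mul_I, mul_one]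
  have hzw : r * zetad n ^ E = ((ρ : ℂ) * Complex.exp (↑θ * Complex.I)) * w := by
    rw [hrw, hzeta]
    rw [mul_comm (((ρ:ℂ) * Complex.exp (↑φ * Complex.I))) w, mul_assoc, mul_assoc]
    rw [← hexp_eq]; ring
  -- z^n
  have hzn : (((ρ : ℂ) * Complex.exp (↑θ * Complex.I))) ^ n = a / w ^ n := by
    have h1 : ((ρ : ℂ) * Complex.exp (↑θ * Complex.I)) = r * zetad n ^ E / w := by
      rw [hzw]; field_simp
    rw [h1, div_pow, mul_pow, hrn, ← pow_mul, mul_comm E n, pow_mul, zetad_pow_self n hn,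
      one_pow, mul_one]
  have habs1 : ‖1 - ((ρ : ℂ) * Complex.exp (↑θ * Complex.I)) ^ n‖
      = ‖a - w ^ n‖ := by
    rw [hzn]
    have hwn0 : w ^ n ≠ 0 := pow_ne_zero n hw0
    rw [show 1 - a / w ^ n = (w ^ n - a) / w ^ n by field_simp, norm_div, hwn, div_one,
      norm_sub_rev]
  have hA := lemA n hn ρ θ c hρ hθ hc0 hc1 (by rw [habs1]; exact ha)
  rw [habs1] at hA
  refine ⟨⟨E - 1, by omega⟩, ?_⟩
  have hE' : (E - 1 : ℕ) + 1 = E := by omega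
  rw [hE']
  have habs2 : ‖r * zetad n ^ E - w‖ = ‖1 - (ρ : ℂ) * Complex.exp (↑θ * Complex.I)‖ := by
    rw [hzw, show ((ρ:ℂ) * Complex.exp (↑θ * Complex.I)) * w - w
      = -((1 - (ρ:ℂ) * Complex.exp (↑θ * Complex.I)) * w) by ring, norm_neg, norm_mul, hw, mul_one]
  rw [habs2]
  exact hA

lemma disc_mem_nonneg {d : ℕ} (hd : 0 < d) (ξ : Fin d → ℂ) :
    ∀ t ∈ {t : ℝ | ∃ u : ℂ, ‖u‖ = 1 ∧
      t = ⨆ j : Fin d, ⨅ i : Fin d, ‖ξ i - u * zetad d ^ ((j : ℕ) + 1)‖}, 0 ≤ t := by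
  rintro t ⟨u, hu, rfl⟩
  haveI : Nonempty (Fin d) := ⟨⟨0, hd⟩⟩
  have h0 : ∀ j : Fin d, 0 ≤ ⨅ i : Fin d, ‖ξ i - u * zetad d ^ ((j : ℕ) + 1)‖ :=
    fun j => le_ciInf fun i => norm_nonneg _
  exact le_ciSup_of_le (Finite.bddAbove_range _) (Classical.arbitrary _) (h0 _)

/-- If `D(α) ≤ 1/2` then the `mn`-tuple of points
`α_k^{1/n} ζ_n^ℓ` (for any fixed choice `r k` of `n`-th roots of `α k`)
has discrepancy at most `(2/n) D(α)`. -/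
theorem stmt6 (m n : ℕ) (hm : 0 < m) (hn : 0 < n) (α : Fin m → ℂ)
    (hD : Disc α ≤ 1 / 2) (r : Fin m → ℂ) (hr : ∀ k, r k ^ n = α k) :
    Disc (fun i : Fin (m * n) =>
        r (finProdFinEquiv.symm i).1 * zetad n ^ (((finProdFinEquiv.symm i).2 : ℕ) + 1)) ≤
      2 / (n : ℝ) * Disc α := by
  haveI hne_m : Nonempty (Fin m) := ⟨⟨0, hm⟩⟩
  have hmn : 0 < m * n := Nat.mul_pos hm hn
  haveI hne_mn : Nonempty (Fin (m * n)) := ⟨⟨0, hmn⟩⟩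
  have hN1 : (1 : ℝ) ≤ (n : ℝ) := by exact_mod_cast hn
  set β : Fin (m * n) → ℂ := fun i =>
    r (finProdFinEquiv.symm i).1 * zetad n ^ (((finProdFinEquiv.symm i).2 : ℕ) + 1) with hβ_def
  have hD0 : 0 ≤ Disc α := Real.sInf_nonneg (disc_mem_nonneg hm α)
  have hβBdd : BddBelow {t : ℝ | ∃ u : ℂ, ‖u‖ = 1 ∧
      t = ⨆ j : Fin (m * n), ⨅ i : Fin (m * n),
        ‖β i - u * zetad (m * n) ^ ((j : ℕ) + 1)‖} :=
    ⟨0, fun t ht => disc_mem_nonneg hmn β t ht⟩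
  have hSα_ne : Set.Nonempty {t : ℝ | ∃ u : ℂ, ‖u‖ = 1 ∧
      t = ⨆ j : Fin m, ⨅ i : Fin m, ‖α i - u * zetad m ^ ((j : ℕ) + 1)‖} :=
    ⟨_, 1, by simp, rfl⟩
  have key : ∀ ε : ℝ, 0 < ε → ε ≤ 1 / 4 → Disc β ≤ 2 / (n : ℝ) * Disc α + 8 * ε := by
    intro ε hε hε4
    obtain ⟨t, ht, htlt⟩ := Real.lt_sInf_add_pos hSα_ne hε
    have htlt : t < Disc α + ε := htlt
    obtain ⟨u, hu, htu⟩ := ht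
    have ht0 : 0 ≤ t := disc_mem_nonneg hm α t ⟨u, hu, htu⟩
    have ht34 : t < 3 / 4 := by linarith
    have hpos : 0 < (1 - t) * (n : ℝ) := by nlinarith
    -- the n-th root of u
    set v := Complex.exp ((↑(u.arg / n) : ℂ) * Complex.I) with hv_def
    have hv : ‖v‖ = 1 := Complex.norm_exp_ofReal_mul_I _
    have hvn : v ^ n = u := by
      rw [hv_def, ← Complex.exp_nat_mul]
      have hnC : (n : ℂ) ≠ 0 := Nat.cast_ne_zero.mpr hn.ne'
      have harg : (n : ℂ) * ((↑(u.arg / n) : ℂ) * Complex.I) = ↑(u.arg) * Complex.I := by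
        push_cast
        field_simp
      rw [harg]
      conv_rhs => rw [← Complex.norm_mul_exp_arg_mul_I u]
      rw [hu, Complex.ofReal_one, one_mul]
    have hb : ∀ J : Fin (m * n),
        (⨅ I : Fin (m * n), ‖β I - v * zetad (m * n) ^ ((J : ℕ) + 1)‖)
          ≤ t / ((1 - t) * (n : ℝ)) := by
      intro J
      set w := v * zetad (m * n) ^ ((J : ℕ) + 1) with hw_def
      have hwabs : ‖w‖ = 1 := by
        rw [hw_def, norm_mul, hv, norm_pow, abs_zetad, one_pow, one_mul]
      set j : Fin m := ⟨(J : ℕ) % m, Nat.mod_lt _ hm⟩ with hj_def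
      have hwn : w ^ n = u * zetad m ^ ((j : ℕ) + 1) := by
        rw [hw_def, mul_pow, hvn, ← pow_mul, mul_comm ((J : ℕ) + 1) n, pow_mul,
          zetad_pow_mn m n hm hn]
        congr 1
        have hJ : (J : ℕ) + 1 = ((J : ℕ) % m + 1) + m * ((J : ℕ) / m) := by
          have := Nat.mod_add_div (J : ℕ) m
          omega
        rw [hJ, pow_add, pow_mul, zetad_pow_self m hm, one_pow, mul_one]
      have hinf_le : (⨅ i : Fin m, ‖α i - u * zetad m ^ ((j : ℕ) + 1)‖) ≤ t := by
        rw [htu]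
        exact le_ciSup (f := fun j' : Fin m =>
          ⨅ i : Fin m, ‖α i - u * zetad m ^ ((j' : ℕ) + 1)‖)
          (Finite.bddAbove_range _) j
      obtain ⟨i₀, hi₀⟩ :=
        Finite.exists_min (fun i : Fin m => ‖α i - u * zetad m ^ ((j : ℕ) + 1)‖)
      have hi₀t : ‖α i₀ - w ^ n‖ ≤ t := by
        rw [hwn]
        exact le_trans (le_ciInf hi₀) hinf_le
      obtain ⟨ℓ, hℓ⟩ := lemB n hn w (α i₀) (r i₀) hwabs (hr i₀) t (by linarith) hi₀t
      set I₀ : Fin (m * n) := finProdFinEquiv (i₀, ℓ) with hI₀_def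
      have hβI : β I₀ = r i₀ * zetad n ^ ((ℓ : ℕ) + 1) := by
        simp only [hβ_def, hI₀_def, Equiv.symm_apply_apply]
      have h1 : (1 - t) * (n : ℝ) * ‖β I₀ - w‖ ≤ t := by
        rw [hβI]
        exact le_trans hℓ hi₀t
      have h2 : (⨅ I : Fin (m * n), ‖β I - w‖) ≤ ‖β I₀ - w‖ :=
        ciInf_le (Finite.bddBelow_range _) I₀
      rw [le_div_iff₀ hpos]
      calc (⨅ I : Fin (m * n), ‖β I - w‖) * ((1 - t) * (n : ℝ))
          = (1 - t) * (n : ℝ) * (⨅ I : Fin (m * n), ‖β I - w‖) := by ring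
        _ ≤ (1 - t) * (n : ℝ) * ‖β I₀ - w‖ :=
            mul_le_mul_of_nonneg_left h2 hpos.le
        _ ≤ t := h1
    have hsup : (⨆ J : Fin (m * n), ⨅ I : Fin (m * n),
        ‖β I - v * zetad (m * n) ^ ((J : ℕ) + 1)‖) ≤ t / ((1 - t) * (n : ℝ)) :=
      ciSup_le hb
    have hDβ : Disc β ≤ t / ((1 - t) * (n : ℝ)) :=
      le_trans (csInf_le hβBdd ⟨v, hv, rfl⟩) hsup
    have harith : t / ((1 - t) * (n : ℝ)) ≤ 2 / (n : ℝ) * Disc α + 8 * ε := by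
      rw [div_le_iff₀ hpos]
      have hnne : (n : ℝ) ≠ 0 := by linarith
      have hexp : (2 / (n : ℝ) * Disc α + 8 * ε) * ((1 - t) * (n : ℝ))
          = 2 * Disc α * (1 - t) + 8 * ε * (n : ℝ) * (1 - t) := by
        field_simp
      rw [hexp]
      nlinarith [mul_nonneg hε.le (by linarith : (0:ℝ) ≤ 1 - t),
        mul_nonneg hD0 (by linarith : (0:ℝ) ≤ 1 - 2 * Disc α),
        mul_nonneg hε.le (by linarith : (0:ℝ) ≤ 1 - 2 * Disc α),
        mul_nonneg hD0 (by linarith : (0:ℝ) ≤ Disc α + ε - t),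
        mul_nonneg (mul_nonneg hε.le (by linarith : (0:ℝ) ≤ (n:ℝ) - 1))
          (by linarith : (0:ℝ) ≤ 1 - t),
        mul_nonneg hε.le (by linarith : (0:ℝ) ≤ 3/4 - t)]
    exact le_trans hDβ harith
  refine le_of_forall_pos_le_add fun ε hε => ?_
  have h := key (min (ε / 8) (1 / 4)) (by positivity) (min_le_right _ _)
  have h8 : 8 * min (ε / 8) (1 / 4) ≤ ε := by
    have := min_le_left (ε / 8) (1 / 4)
    linarith
  linarith
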